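/- Let g_n be a sequence in GL(d,ℝ). Then there exists a subsequence (g_{n_i}) such that the induced maps on real projective space P(ℝ^d) converge pointwise to a map p : P(ℝ^d) → P(ℝ^d). Consequently, the action of GL(d,ℝ) on P(ℝ^d) is tame: the enveloping semigroup consists of pointwise sequential limits of elements of the group. -/

import Mathlib

set_option synthInstance.maxHeartbeats 1000000
set_option maxHeartbeats 1000000

open Filter Topology Projectivization
open scoped LinearAlgebra.Projectivization

variable {d : ℕ}

/-- The quotient topology on the real projective space `ℙ(ℝ^d)`. -/
noncomputable instance : TopologicalSpace (ℙ ℝ (Fin d → ℝ)) :=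
  inferInstanceAs (TopologicalSpace (Quotient (projectivizationSetoid ℝ (Fin d → ℝ))))

/-- The projective map induced by an invertible linear map. -/
noncomputable def projMap (g : (Fin d → ℝ) ≃ₗ[ℝ] (Fin d → ℝ)) :
    ℙ ℝ (Fin d → ℝ) → ℙ ℝ (Fin d → ℝ) :=
  Projectivization.map (g : (Fin d → ℝ) →ₗ[ℝ] (Fin d → ℝ)) g.injective

namespace StmtAux

theorem projMap_mk (g : (Fin d → ℝ) ≃ₗ[ℝ] (Fin d → ℝ)) {v : Fin d → ℝ} (hv : v ≠ 0)
    (hgv : g v ≠ 0) :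
    projMap g (Projectivization.mk ℝ v hv) = Projectivization.mk ℝ (g v) hgv :=
  Projectivization.map_mk _ _ _ _

theorem mk_smul_eq {v : Fin d → ℝ} (hv : v ≠ 0) {c : ℝ} (hc : c ≠ 0)
    (h' : c • v ≠ 0) :
    Projectivization.mk ℝ (c • v) h' = Projectivization.mk ℝ v hv :=
  (Projectivization.mk_eq_mk_iff' ℝ _ _ _ _).mpr ⟨c, rfl⟩

theorem tendsto_mk {ι : Type*} {l : Filter ι} {f : ι → (Fin d → ℝ)} {y : Fin d → ℝ}
    (hf : ∀ i, f i ≠ 0) (hy : y ≠ 0) (h : Tendsto f l (𝓝 y)) :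
    Tendsto (fun i => Projectivization.mk ℝ (f i) (hf i)) l
      (𝓝 (Projectivization.mk ℝ y hy)) := by
  have h1 : Tendsto (fun i => (⟨f i, hf i⟩ : {v : Fin d → ℝ // v ≠ 0})) l (𝓝 ⟨y, hy⟩) :=
    tendsto_subtype_rng.mpr h
  have h2 : Continuous (fun a : {v : Fin d → ℝ // v ≠ 0} =>
      (Quotient.mk (projectivizationSetoid ℝ (Fin d → ℝ)) a : ℙ ℝ (Fin d → ℝ))) :=
    continuous_quot_mk
  exact (h2.tendsto _).comp h1

/-- An auxiliary "outer product" map used to prove Hausdorffness. -/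
noncomputable def sym (v : Fin d → ℝ) : Fin d → Fin d → ℝ :=
  fun i j => (∑ k, v k * v k)⁻¹ * (v i * v j)

theorem sym_smul (v : Fin d → ℝ) {c : ℝ} (hc : c ≠ 0) : sym (c • v) = sym v := by
  funext i j
  simp only [sym, Pi.smul_apply, smul_eq_mul]
  have : ∑ k, (c * v k) * (c * v k) = c ^ 2 * ∑ k, v k * v k := by
    rw [Finset.mul_sum]; congr 1; funext k; ring
  rw [this, mul_inv]
  have h2 : (c ^ 2)⁻¹ * (∑ k, v k * v k)⁻¹ * (c * v i * (c * v j))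
      = (c ^ 2 * (c ^ 2)⁻¹) * ((∑ k, v k * v k)⁻¹ * (v i * v j)) := by
    ring
  rw [h2, mul_inv_cancel₀ (pow_ne_zero 2 hc), one_mul]

theorem sum_sq_ne_zero {v : Fin d → ℝ} (hv : v ≠ 0) : (∑ k, v k * v k) ≠ 0 := by
  have : 0 < ∑ k, v k * v k := by
    obtain ⟨i, hi⟩ : ∃ i, v i ≠ 0 := by
      by_contra h
      push_neg at h
      exact hv (funext h)
    exact Finset.sum_pos' (fun k _ => mul_self_nonneg _)
      ⟨i, Finset.mem_univ i, mul_self_pos.mpr hi⟩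
  exact this.ne'

theorem sym_inj {v w : Fin d → ℝ} (hv : v ≠ 0) (hw : w ≠ 0) (h : sym v = sym w) :
    ∃ c : ℝ, c • w = v := by
  have hQv := sum_sq_ne_zero hv
  have hQw := sum_sq_ne_zero hw
  obtain ⟨i, hi⟩ : ∃ i, v i ≠ 0 := by
    by_contra hcon; push_neg at hcon; exact hv (funext hcon)
  have key : ∀ a b : Fin d, (∑ k, v k * v k)⁻¹ * (v a * v b)
      = (∑ k, w k * w k)⁻¹ * (w a * w b) := by
    intro a b
    have := congrFun (congrFun h a) b
    simpa [sym] using this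
  have hwi : w i ≠ 0 := by
    intro hwi0
    have := key i i
    rw [hwi0] at this
    simp only [mul_zero, zero_mul] at this
    exact (mul_ne_zero (inv_ne_zero hQv) (mul_ne_zero hi hi)) this
  refine ⟨((∑ k, v k * v k) * (∑ k, w k * w k)⁻¹) * (w i / v i), funext fun j => ?_⟩
  have h3 := key i j
  simp only [Pi.smul_apply, smul_eq_mul]
  calc (∑ k, v k * v k) * (∑ k, w k * w k)⁻¹ * (w i / v i) * w j
      = (∑ k, v k * v k) * ((∑ k, w k * w k)⁻¹ * (w i * w j)) / v i := by ring
    _ = (∑ k, v k * v k) * ((∑ k, v k * v k)⁻¹ * (v i * v j)) / v i := by rw [← h3]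
    _ = v j := by rw [← mul_assoc, mul_inv_cancel₀ hQv, one_mul, mul_div_cancel_left₀ _ hi]

end StmtAux

namespace StmtAux

noncomputable def symQ : ℙ ℝ (Fin d → ℝ) → (Fin d → Fin d → ℝ) :=
  Quotient.lift (fun x : {v : Fin d → ℝ // v ≠ 0} => sym x.val) (by
    rintro ⟨a, ha⟩ ⟨b, hb⟩ h
    obtain ⟨x, hx⟩ := h
    show sym a = sym b
    have hx' : (x : ℝ) • b = a := by
      have := hx
      simp only [Units.smul_def] at this
      exact this
    rw [← hx']
    exact sym_smul b (Units.ne_zero x))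

theorem symQ_mk (v : Fin d → ℝ) (hv : v ≠ 0) :
    symQ (Projectivization.mk ℝ v hv) = sym v := rfl

theorem symQ_cont : Continuous (symQ : ℙ ℝ (Fin d → ℝ) → (Fin d → Fin d → ℝ)) := by
  apply continuous_quot_lift
  apply continuous_pi
  intro i
  apply continuous_pi
  intro j
  have hsum : Continuous fun x : {v : Fin d → ℝ // v ≠ 0} => ∑ k, x.val k * x.val k := by
    apply continuous_finset_sum
    intro k _
    exact ((continuous_apply k).comp continuous_subtype_val).mul
      ((continuous_apply k).comp continuous_subtype_val)
  exact (hsum.inv₀ fun x => sum_sq_ne_zero x.2).mul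
    (((continuous_apply i).comp continuous_subtype_val).mul
      ((continuous_apply j).comp continuous_subtype_val))

theorem symQ_inj : Function.Injective (symQ : ℙ ℝ (Fin d → ℝ) → (Fin d → Fin d → ℝ)) := by
  intro x y h
  induction x using Projectivization.ind with | h v hv =>
  induction y using Projectivization.ind with | h w hw =>
  rw [symQ_mk, symQ_mk] at h
  exact (Projectivization.mk_eq_mk_iff' ℝ _ _ hv hw).mpr (sym_inj hv hw h)

instance : T2Space (ℙ ℝ (Fin d → ℝ)) := by
  constructor
  intro x y hxy
  obtain ⟨U, Vs, hU, hV, hxU, hyV, hUV⟩ := t2_separation (fun h => hxy (symQ_inj h))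
  exact ⟨symQ ⁻¹' U, symQ ⁻¹' Vs, hU.preimage symQ_cont, hV.preimage symQ_cont,
    hxU, hyV, hUV.preimage _⟩

end StmtAux

namespace StmtAux

open Module

noncomputable instance (W : Submodule ℝ (Fin d → ℝ)) :
    NormedAddCommGroup (W →L[ℝ] (Fin d → ℝ)) :=
  ContinuousLinearMap.toNormedAddCommGroup

noncomputable instance (W : Submodule ℝ (Fin d → ℝ)) :
    NormedSpace ℝ (W →L[ℝ] (Fin d → ℝ)) :=
  ContinuousLinearMap.toNormedSpace

instance (W : Submodule ℝ (Fin d → ℝ)) : ProperSpace (W →L[ℝ] (Fin d → ℝ)) :=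
  FiniteDimensional.proper ℝ _

/-- Restriction of an invertible map to a subspace, as a continuous linear map. -/
noncomputable def restr (W : Submodule ℝ (Fin d → ℝ)) (g : (Fin d → ℝ) ≃ₗ[ℝ] (Fin d → ℝ)) :
    W →L[ℝ] (Fin d → ℝ) :=
  LinearMap.toContinuousLinearMap ((g : (Fin d → ℝ) →ₗ[ℝ] (Fin d → ℝ)).comp W.subtype)

theorem restr_apply (W : Submodule ℝ (Fin d → ℝ)) (g : (Fin d → ℝ) ≃ₗ[ℝ] (Fin d → ℝ))
    (w : W) : restr W g w = g (w : Fin d → ℝ) := by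
  simp [restr]

theorem restr_norm_pos {W : Submodule ℝ (Fin d → ℝ)} (hW : W ≠ ⊥)
    (g : (Fin d → ℝ) ≃ₗ[ℝ] (Fin d → ℝ)) : 0 < ‖restr W g‖ := by
  rcases Submodule.exists_mem_ne_zero_of_ne_bot hW with ⟨v, hvW, hv⟩
  have h1 : restr W g ⟨v, hvW⟩ ≠ 0 := by
    rw [restr_apply]
    exact (LinearEquiv.map_ne_zero_iff g).mpr hv
  have hne : restr W g ≠ 0 := fun h => h1 (by rw [h]; rfl)
  refine lt_of_le_of_ne (norm_nonneg _) fun h0 => hne ?_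
  exact (ContinuousLinearMap.opNorm_zero_iff (restr W g)).mp h0.symm

/-- Normalized restriction. -/
noncomputable def nrestr (W : Submodule ℝ (Fin d → ℝ)) (g : (Fin d → ℝ) ≃ₗ[ℝ] (Fin d → ℝ)) :
    W →L[ℝ] (Fin d → ℝ) :=
  ‖restr W g‖⁻¹ • restr W g

theorem nrestr_apply (W : Submodule ℝ (Fin d → ℝ)) (g : (Fin d → ℝ) ≃ₗ[ℝ] (Fin d → ℝ))
    (w : W) : nrestr W g w = ‖restr W g‖⁻¹ • g (w : Fin d → ℝ) := by
  simp [nrestr, restr_apply]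

theorem nrestr_mem_sphere {W : Submodule ℝ (Fin d → ℝ)} (hW : W ≠ ⊥)
    (g : (Fin d → ℝ) ≃ₗ[ℝ] (Fin d → ℝ)) :
    nrestr W g ∈ Metric.sphere (0 : W →L[ℝ] (Fin d → ℝ)) 1 := by
  have h := restr_norm_pos hW g
  rw [Metric.mem_sphere, dist_zero_right, nrestr, norm_smul, norm_inv, norm_norm]
  exact inv_mul_cancel₀ h.ne'

theorem nrestr_ne_zero {W : Submodule ℝ (Fin d → ℝ)} (hW : W ≠ ⊥)
    (g : (Fin d → ℝ) ≃ₗ[ℝ] (Fin d → ℝ)) (w : W) (hw : (w : Fin d → ℝ) ≠ 0) :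
    nrestr W g w ≠ 0 := by
  rw [nrestr_apply]
  exact smul_ne_zero (inv_ne_zero (restr_norm_pos hW g).ne')
    ((LinearEquiv.map_ne_zero_iff g).mpr hw)

theorem eval_cont {W : Submodule ℝ (Fin d → ℝ)} (w : W) :
    Continuous fun φ : W →L[ℝ] (Fin d → ℝ) => φ w :=
  isBoundedBilinearMap_apply.continuous.comp (continuous_id.prodMk continuous_const)

theorem projMap_eq_mk_nrestr {W : Submodule ℝ (Fin d → ℝ)} (hW : W ≠ ⊥)
    (g : (Fin d → ℝ) ≃ₗ[ℝ] (Fin d → ℝ)) (w : W) (hw : (w : Fin d → ℝ) ≠ 0) :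
    projMap g (Projectivization.mk ℝ (w : Fin d → ℝ) hw)
      = Projectivization.mk ℝ (nrestr W g w) (nrestr_ne_zero hW g w hw) := by
  rw [projMap_mk g hw ((LinearEquiv.map_ne_zero_iff g).mpr hw)]
  have h0 : g (w : Fin d → ℝ) ≠ 0 := (LinearEquiv.map_ne_zero_iff g).mpr hw
  have : nrestr W g w = ‖restr W g‖⁻¹ • g (w : Fin d → ℝ) := nrestr_apply W g w
  rw [Projectivization.mk_eq_mk_iff' ℝ _ _ _ _ ]
  refine ⟨‖restr W g‖, ?_⟩
  rw [this, smul_smul, mul_inv_cancel₀ (restr_norm_pos hW g).ne', one_smul]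

theorem lemA : ∀ (n : ℕ) (W : Submodule ℝ (Fin d → ℝ)), finrank ℝ W ≤ n →
    ∀ g : ℕ → (Fin d → ℝ) ≃ₗ[ℝ] (Fin d → ℝ),
    ∃ φ : ℕ → ℕ, StrictMono φ ∧ ∀ (v : Fin d → ℝ) (hv : v ≠ 0), v ∈ W →
      ∃ y, Tendsto (fun i => projMap (g (φ i)) (Projectivization.mk ℝ v hv)) atTop (𝓝 y) := by
  intro n
  induction n with
  | zero =>
    intro W hW g
    refine ⟨id, strictMono_id, fun v hv hvW => absurd ?_ hv⟩
    have hbot : W = ⊥ := Submodule.finrank_eq_zero.mp (Nat.le_zero.mp hW)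
    rw [hbot] at hvW
    exact hvW
  | succ n IH =>
    intro W hWn g
    by_cases hbot : W = ⊥
    · refine ⟨id, strictMono_id, fun v hv hvW => absurd ?_ hv⟩
      rw [hbot] at hvW
      exact hvW
    · obtain ⟨A, hAs, φ₁, hφ₁, hconv⟩ :=
        (isCompact_sphere (0 : W →L[ℝ] (Fin d → ℝ)) 1).tendsto_subseq
          (fun m => nrestr_mem_sphere hbot (g m))
      have hAne : A ≠ 0 := by
        intro h
        rw [Metric.mem_sphere, dist_zero_right, h, norm_zero] at hAs
        exact one_ne_zero hAs.symm
      obtain ⟨w1, hw1⟩ : ∃ w1 : W, A w1 ≠ 0 := by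
        by_contra h
        push_neg at h
        exact hAne (ContinuousLinearMap.ext fun w => by rw [h w]; rfl)
      obtain ⟨U, hU⟩ := Submodule.exists_isCompl W
      set Ab : (Fin d → ℝ) →ₗ[ℝ] (Fin d → ℝ) :=
        (A : W →ₗ[ℝ] (Fin d → ℝ)).comp (W.linearProjOfIsCompl U hU) with hAbdef
      have hAb : ∀ (v : Fin d → ℝ) (hvW : v ∈ W), Ab v = A ⟨v, hvW⟩ := by
        intro v hvW
        have : W.linearProjOfIsCompl U hU v = ⟨v, hvW⟩ :=
          Submodule.linearProjOfIsCompl_apply_left hU ⟨v, hvW⟩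
        simp [hAbdef, this]
      set W' := W ⊓ LinearMap.ker Ab with hW'def
      have hlt : W' < W := by
        refine lt_of_le_of_ne inf_le_left (fun h => hw1 ?_)
        have hmem : (w1 : Fin d → ℝ) ∈ W ⊓ LinearMap.ker Ab := by
          rw [← hW'def, h]; exact w1.2
        have h2 := (Submodule.mem_inf.mp hmem).2
        rw [LinearMap.mem_ker, hAb _ w1.2] at h2
        simpa using h2
      have hfr : finrank ℝ W' ≤ n := by
        have := Submodule.finrank_lt_finrank_of_lt hlt
        omega
      obtain ⟨φ₂, hφ₂, H2⟩ := IH W' hfr (fun m => g (φ₁ m))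
      refine ⟨φ₁ ∘ φ₂, hφ₁.comp hφ₂, ?_⟩
      intro v hv hvW
      by_cases hker : Ab v = 0
      · exact H2 v hv ⟨hvW, LinearMap.mem_ker.mpr hker⟩
      · have hAw : A ⟨v, hvW⟩ ≠ 0 := by rw [← hAb v hvW]; exact hker
        refine ⟨Projectivization.mk ℝ (A ⟨v, hvW⟩) hAw, ?_⟩
        have h1 : Tendsto (fun i => nrestr W (g (φ₁ i)) ⟨v, hvW⟩) atTop (𝓝 (A ⟨v, hvW⟩)) :=
          ((eval_cont (⟨v, hvW⟩ : W)).tendsto A).comp hconv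
        have h2 : Tendsto (fun i => nrestr W (g (φ₁ (φ₂ i))) ⟨v, hvW⟩) atTop
            (𝓝 (A ⟨v, hvW⟩)) := h1.comp hφ₂.tendsto_atTop
        have h3 := tendsto_mk
          (fun i => nrestr_ne_zero hbot (g (φ₁ (φ₂ i))) ⟨v, hvW⟩ hv) hAw h2
        refine h3.congr fun i => ?_
        exact (projMap_eq_mk_nrestr hbot (g (φ₁ (φ₂ i))) ⟨v, hvW⟩ hv).symm

end StmtAux

namespace StmtAux

open Module

theorem mk_congr {v w : Fin d → ℝ} (hv : v ≠ 0) (hw : w ≠ 0) (h : v = w) :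
    Projectivization.mk ℝ v hv = Projectivization.mk ℝ w hw := by subst h; rfl

theorem neBot_inf_comap {α β : Type*} [TopologicalSpace β] (L : Filter α) [hL : L.NeBot]
    (N : α → β) (A : β) (h : ClusterPt A (Filter.map N L)) :
    (L ⊓ Filter.comap N (𝓝 A)).NeBot := by
  refine Filter.forall_mem_nonempty_iff_neBot.mp ?_
  intro s hs
  rw [Filter.mem_inf_iff] at hs
  obtain ⟨t₁, ht₁, t₂, ht₂, rfl⟩ := hs
  obtain ⟨T, hT, hTsub⟩ := Filter.mem_comap.mp ht₂
  have himg : N '' t₁ ∈ Filter.map N L :=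
    Filter.mem_map.mpr (Filter.mem_of_superset ht₁ (Set.subset_preimage_image N t₁))
  haveI : (𝓝 A ⊓ Filter.map N L).NeBot := h
  have hmem : T ∩ N '' t₁ ∈ 𝓝 A ⊓ Filter.map N L :=
    Filter.inter_mem (Filter.mem_inf_of_left hT) (Filter.mem_inf_of_right himg)
  obtain ⟨y, hyT, x, hxt₁, rfl⟩ := Filter.nonempty_of_mem hmem
  exact ⟨x, hxt₁, hTsub hyT⟩

/-- `p` is represented on `W` by a "tower" of linear maps. -/
inductive Rep (p : ℙ ℝ (Fin d → ℝ) → ℙ ℝ (Fin d → ℝ)) : Submodule ℝ (Fin d → ℝ) → Prop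
  | bot : Rep p ⊥
  | step (W : Submodule ℝ (Fin d → ℝ)) (A : (Fin d → ℝ) →ₗ[ℝ] (Fin d → ℝ))
      (hex : ∃ v ∈ W, A v ≠ 0)
      (hagree : ∀ (v : Fin d → ℝ) (hv : v ≠ 0), v ∈ W → ∀ (hAv : A v ≠ 0),
        p (Projectivization.mk ℝ v hv) = Projectivization.mk ℝ (A v) hAv)
      (hrec : Rep p (W ⊓ LinearMap.ker A)) : Rep p W

theorem rep_of_filter : ∀ (n : ℕ) (W : Submodule ℝ (Fin d → ℝ)), finrank ℝ W ≤ n →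
    ∀ (p : ℙ ℝ (Fin d → ℝ) → ℙ ℝ (Fin d → ℝ)) (L : Filter ((Fin d → ℝ) ≃ₗ[ℝ] (Fin d → ℝ))),
      L.NeBot →
      (∀ (v : Fin d → ℝ) (hv : v ≠ 0),
        Tendsto (fun g => projMap g (Projectivization.mk ℝ v hv)) L
          (𝓝 (p (Projectivization.mk ℝ v hv)))) →
      Rep p W := by
  intro n
  induction n with
  | zero =>
    intro W hW p L hL hp
    have hbot : W = ⊥ := Submodule.finrank_eq_zero.mp (Nat.le_zero.mp hW)
    rw [hbot]; exact Rep.bot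
  | succ n IH =>
    intro W hWn p L hL hp
    by_cases hbot : W = ⊥
    · rw [hbot]; exact Rep.bot
    · haveI := hL
      have hmaple : Filter.map (nrestr W) L ≤ 𝓟 (Metric.sphere (0 : W →L[ℝ] (Fin d → ℝ)) 1) := by
        rw [Filter.le_principal_iff]
        exact Filter.mem_map.mpr (Filter.mem_of_superset Filter.univ_mem
          fun g _ => nrestr_mem_sphere hbot g)
      obtain ⟨A, hAs, hclA⟩ :=
        (isCompact_sphere (0 : W →L[ℝ] (Fin d → ℝ)) 1).exists_clusterPt hmaple
      have hAne : A ≠ 0 := by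
        intro h
        rw [Metric.mem_sphere, dist_zero_right, h, norm_zero] at hAs
        exact one_ne_zero hAs.symm
      obtain ⟨w1, hw1⟩ : ∃ w1 : W, A w1 ≠ 0 := by
        by_contra h
        push_neg at h
        exact hAne (ContinuousLinearMap.ext fun w => by rw [h w]; rfl)
      obtain ⟨U, hU⟩ := Submodule.exists_isCompl W
      set Ab : (Fin d → ℝ) →ₗ[ℝ] (Fin d → ℝ) :=
        (A : W →ₗ[ℝ] (Fin d → ℝ)).comp (W.linearProjOfIsCompl U hU) with hAbdef
      have hAb : ∀ (v : Fin d → ℝ) (hvW : v ∈ W), Ab v = A ⟨v, hvW⟩ := by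
        intro v hvW
        have : W.linearProjOfIsCompl U hU v = ⟨v, hvW⟩ :=
          Submodule.linearProjOfIsCompl_apply_left hU ⟨v, hvW⟩
        simp [hAbdef, this]
      set L' := L ⊓ Filter.comap (nrestr W) (𝓝 A) with hL'def
      haveI hL' : L'.NeBot := neBot_inf_comap L (nrestr W) A hclA
      have tendN : Tendsto (fun g => nrestr W g) L' (𝓝 A) :=
        tendsto_comap.mono_left inf_le_right
      -- agreement on points where Ab does not vanish
      have hagree : ∀ (v : Fin d → ℝ) (hv : v ≠ 0), v ∈ W → ∀ (hAv : Ab v ≠ 0),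
          p (Projectivization.mk ℝ v hv) = Projectivization.mk ℝ (Ab v) hAv := by
        intro v hv hvW hAv
        have hAw : A ⟨v, hvW⟩ ≠ 0 := by rw [← hAb v hvW]; exact hAv
        have tendEval : Tendsto (fun g => nrestr W g ⟨v, hvW⟩) L' (𝓝 (A ⟨v, hvW⟩)) :=
          ((eval_cont (⟨v, hvW⟩ : W)).tendsto A).comp tendN
        have tendmk := tendsto_mk
          (fun g => nrestr_ne_zero hbot g ⟨v, hvW⟩ hv) hAw tendEval
        have tendproj : Tendsto (fun g => projMap g (Projectivization.mk ℝ v hv)) L'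
            (𝓝 (Projectivization.mk ℝ (A ⟨v, hvW⟩) hAw)) :=
          tendmk.congr fun g => (projMap_eq_mk_nrestr hbot g ⟨v, hvW⟩ hv).symm
        have tendp : Tendsto (fun g => projMap g (Projectivization.mk ℝ v hv)) L'
            (𝓝 (p (Projectivization.mk ℝ v hv))) := (hp v hv).mono_left inf_le_left
        rw [tendsto_nhds_unique tendp tendproj]
        exact mk_congr _ _ (hAb v hvW).symm
      refine Rep.step W Ab ⟨(w1 : Fin d → ℝ), w1.2, ?_⟩ hagree ?_
      · rw [hAb _ w1.2]
        simpa using hw1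
      · -- recursive step
        have hlt : W ⊓ LinearMap.ker Ab < W := by
          refine lt_of_le_of_ne inf_le_left (fun h => hw1 ?_)
          have hmem : (w1 : Fin d → ℝ) ∈ W ⊓ LinearMap.ker Ab := by
            rw [h]; exact w1.2
          have h2 := (Submodule.mem_inf.mp hmem).2
          rw [LinearMap.mem_ker, hAb _ w1.2] at h2
          simpa using h2
        have hfr : finrank ℝ (W ⊓ LinearMap.ker Ab : Submodule ℝ (Fin d → ℝ)) ≤ n := by
          have := Submodule.finrank_lt_finrank_of_lt hlt
          omega
        exact IH _ hfr p L' hL' fun v hv => (hp v hv).mono_left inf_le_left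

end StmtAux

namespace StmtAux

open Module

theorem exists_pert (T : (Fin d → ℝ) →ₗ[ℝ] (Fin d → ℝ)) :
    ∃ δ : ℕ → ℝ,
      (∀ n, Function.Injective (T + δ n • LinearMap.id : (Fin d → ℝ) →ₗ[ℝ] (Fin d → ℝ))) ∧
      Tendsto δ atTop (𝓝 0) := by
  have hfin : {μ : ℝ | Module.End.HasEigenvalue (T : Module.End ℝ (Fin d → ℝ)) μ}.Finite := by
    have hne : minpoly ℝ (T : Module.End ℝ (Fin d → ℝ)) ≠ 0 :=
      minpoly.ne_zero (Algebra.IsIntegral.isIntegral _)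
    exact (Polynomial.finite_setOf_isRoot hne).subset
      fun μ hμ => Module.End.hasEigenvalue_iff_isRoot.mp hμ
  have hch : ∀ n : ℕ, ∃ δ : ℝ, δ ∈ Set.Ioo 0 (((n : ℝ) + 1)⁻¹) ∧
      ¬ Module.End.HasEigenvalue (T : Module.End ℝ (Fin d → ℝ)) (-δ) := by
    intro n
    have hIoo : (Set.Ioo (0 : ℝ) (((n : ℝ) + 1)⁻¹)).Infinite :=
      Set.infinite_coe_iff.mp (Set.Ioo.infinite (by positivity))
    have hpre : ((fun x : ℝ => -x) ⁻¹'
        {μ : ℝ | Module.End.HasEigenvalue (T : Module.End ℝ (Fin d → ℝ)) μ}).Finite :=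
      Set.Finite.preimage (Set.injOn_of_injective neg_injective) hfin
    obtain ⟨δ, hδ⟩ := (hIoo.diff hpre).nonempty
    exact ⟨δ, hδ.1, fun hcon => hδ.2 hcon⟩
  choose δ hδIoo hδeig using hch
  refine ⟨δ, ?_, ?_⟩
  · intro n
    rw [← LinearMap.ker_eq_bot]
    by_contra hne
    apply hδeig n
    apply Module.End.hasEigenvalue_iff.mpr
    rw [Module.End.eigenspace_def]
    have heq : (T : Module.End ℝ (Fin d → ℝ)) - (-(δ n)) • 1
        = T + δ n • LinearMap.id := by
      ext x
      simp [LinearMap.sub_apply, LinearMap.add_apply, LinearMap.smul_apply,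
        sub_eq_add_neg, neg_smul, neg_neg]
    rw [heq]
    exact hne
  · refine tendsto_of_tendsto_of_tendsto_of_le_of_le tendsto_const_nhds ?_
      (fun n => (hδIoo n).1.le) (fun n => (hδIoo n).2.le)
    have := tendsto_one_div_add_atTop_nhds_zero_nat (𝕜 := ℝ)
    simpa [one_div] using this

theorem seq_of_rep {p : ℙ ℝ (Fin d → ℝ) → ℙ ℝ (Fin d → ℝ)} {W : Submodule ℝ (Fin d → ℝ)}
    (hrep : Rep p W) :
    ∃ (T : (Fin d → ℝ) →ₗ[ℝ] (Fin d → ℝ)) (σ : ℕ → (Fin d → ℝ) ≃ₗ[ℝ] (Fin d → ℝ)),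
      (∀ (n : ℕ) (x : Fin d → ℝ), x ∈ W → σ n x ∈ W) ∧
      (∀ (v : Fin d → ℝ) (hv : v ≠ 0), v ∈ W →
        ∃ (c : ℕ → ℝ) (u : Fin d → ℝ) (hu : T u ≠ 0),
          u ∈ W ∧ (∀ n, c n ≠ 0) ∧
          Tendsto (fun n => c n • (σ n v)) atTop (𝓝 u) ∧
          p (Projectivization.mk ℝ v hv) = Projectivization.mk ℝ (T u) hu) := by
  induction hrep with
  | bot =>
    refine ⟨0, fun _ => LinearEquiv.refl ℝ _, by simp, ?_⟩
    intro v hv hvW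
    exact absurd ((Submodule.mem_bot ℝ).mp hvW) hv
  | step W A hex hagree hrec IH =>
    obtain ⟨T', σ', hσ'W, hIH⟩ := IH
    set W' : Submodule ℝ (Fin d → ℝ) := W ⊓ LinearMap.ker A with hW'
    obtain ⟨CU, hCU⟩ := Submodule.exists_isCompl W'
    set ρ : (Fin d → ℝ) →ₗ[ℝ] (Fin d → ℝ) :=
      W'.subtype ∘ₗ (W'.projectionOnto CU hCU) with hρdef
    set τ : (Fin d → ℝ) →ₗ[ℝ] (Fin d → ℝ) :=
      CU.subtype ∘ₗ (CU.projectionOnto W' hCU.symm) with hτdef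
    have hρτ : ∀ x, ρ x + τ x = x := fun x =>
      Submodule.projection_add_projection_eq_self hCU x
    have hρmem : ∀ x, ρ x ∈ W' := fun x => (W'.projectionOnto CU hCU x).2
    have hτmem : ∀ x, τ x ∈ CU := fun x => (CU.projectionOnto W' hCU.symm x).2
    have hρW' : ∀ x ∈ W', ρ x = x := by
      intro x hx
      show (W'.subtype) (W'.projectionOnto CU hCU x) = x
      rw [show x = ((⟨x, hx⟩ : W') : Fin d → ℝ) from rfl,
        Submodule.projectionOnto_apply_left hCU ⟨x, hx⟩]
      rfl
    have hτW' : ∀ x ∈ W', τ x = 0 := by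
      intro x hx
      show (CU.subtype) (CU.projectionOnto W' hCU.symm x) = 0
      rw [Submodule.projectionOnto_apply_of_mem_right hCU.symm hx]
      rfl
    have hρCU : ∀ x ∈ CU, ρ x = 0 := by
      intro x hx
      show (W'.subtype) (W'.projectionOnto CU hCU x) = 0
      rw [Submodule.projectionOnto_apply_of_mem_right hCU hx]
      rfl
    have hτCU : ∀ x ∈ CU, τ x = x := by
      intro x hx
      have := hρτ x
      rw [hρCU x hx, zero_add] at this
      exact this
    set T : (Fin d → ℝ) →ₗ[ℝ] (Fin d → ℝ) := A ∘ₗ τ + T' ∘ₗ ρ with hTdef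
    set ε : ℕ → ℝ := fun n =>
      ((n : ℝ) + 1)⁻¹ *
        (1 + ‖LinearMap.toContinuousLinearMap ((σ' n : (Fin d → ℝ) →ₗ[ℝ] (Fin d → ℝ)))‖)⁻¹
      with hεdef
    have hnorm_nonneg : ∀ n, (0 : ℝ) ≤
        ‖LinearMap.toContinuousLinearMap ((σ' n : (Fin d → ℝ) →ₗ[ℝ] (Fin d → ℝ)))‖ :=
      fun n => norm_nonneg _
    have hεpos : ∀ n, 0 < ε n := by
      intro n
      have h1 : (0 : ℝ) < (n : ℝ) + 1 := by positivity
      have h2 : (0 : ℝ) < 1 + ‖LinearMap.toContinuousLinearMap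
          ((σ' n : (Fin d → ℝ) →ₗ[ℝ] (Fin d → ℝ)))‖ := by
        have := hnorm_nonneg n
        linarith
      exact mul_pos (inv_pos.mpr h1) (inv_pos.mpr h2)
    set S : ℕ → (Fin d → ℝ) →ₗ[ℝ] (Fin d → ℝ) :=
      fun n => τ + ε n • ((σ' n : (Fin d → ℝ) →ₗ[ℝ] (Fin d → ℝ)) ∘ₗ ρ) with hSdef
    have hSapp : ∀ n x, S n x = τ x + ε n • (σ' n (ρ x)) := by
      intro n x
      simp [hSdef]
    have hSinj : ∀ n, Function.Injective (S n) := by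
      intro n
      rw [← LinearMap.ker_eq_bot]
      rw [Submodule.eq_bot_iff]
      intro x hx
      rw [LinearMap.mem_ker, hSapp] at hx
      have hb : ε n • (σ' n (ρ x)) ∈ W' :=
        Submodule.smul_mem _ _ (hσ'W n _ (hρmem x))
      have ha : τ x ∈ W' := by
        have heq : τ x = -(ε n • (σ' n (ρ x))) := eq_neg_of_add_eq_zero_left hx
        rw [heq]
        exact Submodule.neg_mem _ hb
      have hτ0 : τ x = 0 :=
        Submodule.disjoint_def.mp hCU.symm.disjoint (τ x) (hτmem x) ha  -- CU disj W'? careful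
      have hσ0 : ε n • (σ' n (ρ x)) = 0 := by
        rw [hτ0, zero_add] at hx
        exact hx
      have hρ0 : ρ x = 0 := by
        rcases smul_eq_zero.mp hσ0 with h | h
        · exact absurd h (hεpos n).ne'
        · exact (LinearEquiv.map_eq_zero_iff (σ' n)).mp h
      have := hρτ x
      rw [hρ0, hτ0, add_zero] at this
      exact this.symm
    set σ : ℕ → (Fin d → ℝ) ≃ₗ[ℝ] (Fin d → ℝ) :=
      fun n => LinearEquiv.ofInjectiveEndo (S n) (hSinj n) with hσdef
    have hσapp : ∀ n x, σ n x = τ x + ε n • (σ' n (ρ x)) := by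
      intro n x
      have : σ n x = S n x := by
        rw [hσdef]
        exact congrFun (LinearEquiv.coe_ofInjectiveEndo (S n) (hSinj n)) x
      rw [this, hSapp]
    have hW'leW : W' ≤ W := inf_le_left
    have hW'ker : W' ≤ LinearMap.ker A := inf_le_right
    have hτsub : ∀ x, τ x = x - ρ x := fun x => eq_sub_of_add_eq' (hρτ x)
    refine ⟨T, σ, ?_, ?_⟩
    · intro n x hxW
      rw [hσapp]
      refine Submodule.add_mem _ ?_ ?_
      · rw [hτsub]
        exact Submodule.sub_mem _ hxW (hW'leW (hρmem x))
      · exact Submodule.smul_mem _ _ (hW'leW (hσ'W n _ (hρmem x)))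
    · intro v hv hvW
      by_cases hτv : τ v = 0
      · -- v lies in W'
        have hvW' : v ∈ W' := by
          have := hρτ v
          rw [hτv, add_zero] at this
          rw [← this]
          exact hρmem v
        obtain ⟨c', u', hu', hu'W, hc', hconv', hp'⟩ := hIH v hv hvW'
        have hTu : T u' = T' u' := by
          rw [hTdef]
          show A (τ u') + T' (ρ u') = T' u'
          rw [hτW' u' hu'W, hρW' u' hu'W, map_zero, zero_add]
        refine ⟨fun n => (ε n)⁻¹ * c' n, u', by rw [hTu]; exact hu', hW'leW hu'W,
          fun n => mul_ne_zero (inv_ne_zero (hεpos n).ne') (hc' n), ?_, ?_⟩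
        · refine hconv'.congr fun n => ?_
          rw [hσapp, hτv, hρW' v hvW', zero_add, smul_smul]
          congr 1
          field_simp
          rw [mul_div_cancel_right₀ _ (hεpos n).ne']
        · rw [hp']
          exact mk_congr _ _ (by rw [hTu])
      · -- main stratum
        set u := τ v with hudef
        have huCU : u ∈ CU := hτmem v
        have huW : u ∈ W := by
          rw [hudef, hτsub]
          exact Submodule.sub_mem _ hvW (hW'leW (hρmem v))
        have hAρ : A (ρ v) = 0 := LinearMap.mem_ker.mp (hW'ker (hρmem v))
        have hAvu : A v = A u := by
          have := hρτ v
          calc A v = A (ρ v + τ v) := by rw [hρτ v]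
          _ = A (ρ v) + A (τ v) := map_add _ _ _
          _ = A u := by rw [hAρ, zero_add]
        have hAu : A u ≠ 0 := by
          intro h0
          have huW' : u ∈ W' := Submodule.mem_inf.mpr ⟨huW, LinearMap.mem_ker.mpr h0⟩
          exact hτv (Submodule.disjoint_def.mp hCU.disjoint u huW' huCU)
        have hTu : T u = A u := by
          rw [hTdef]
          show A (τ u) + T' (ρ u) = A u
          rw [hτCU u huCU, hρCU u huCU, map_zero, add_zero]
        have hAv : A v ≠ 0 := by rw [hAvu]; exact hAu
        refine ⟨fun _ => (1 : ℝ), u, by rw [hTu]; exact hAu, huW,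
          fun _ => one_ne_zero, ?_, ?_⟩
        · have hsmall : Tendsto (fun n => ε n • (σ' n (ρ v))) atTop (𝓝 0) := by
            have hbound : ∀ n : ℕ, ‖ε n • (σ' n (ρ v))‖ ≤ ((n : ℝ) + 1)⁻¹ * ‖ρ v‖ := by
              intro n
              set C := ‖LinearMap.toContinuousLinearMap
                ((σ' n : (Fin d → ℝ) →ₗ[ℝ] (Fin d → ℝ)))‖ with hCdef
              have hC0 : 0 ≤ C := hnorm_nonneg n
              have hle1 : ‖σ' n (ρ v)‖ ≤ C * ‖ρ v‖ := by
                have := (LinearMap.toContinuousLinearMap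
                  ((σ' n : (Fin d → ℝ) →ₗ[ℝ] (Fin d → ℝ)))).le_opNorm (ρ v)
                rw [LinearMap.coe_toContinuousLinearMap'] at this
                exact this
              have hn1 : (0:ℝ) < (n : ℝ) + 1 := by positivity
              rw [norm_smul, Real.norm_eq_abs, abs_of_pos (hεpos n)]
              calc ε n * ‖σ' n (ρ v)‖ ≤ ε n * (C * ‖ρ v‖) := by
                    exact mul_le_mul_of_nonneg_left hle1 (hεpos n).le
                _ ≤ ((n : ℝ) + 1)⁻¹ * ‖ρ v‖ := by
                    rw [hεdef]
                    have h1C : (0:ℝ) < 1 + C := by linarith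
                    have key : (1 + C)⁻¹ * C ≤ 1 := by
                      rw [inv_mul_le_iff₀ h1C]
                      linarith
                    calc ((n : ℝ) + 1)⁻¹ * (1 + C)⁻¹ * (C * ‖ρ v‖)
                        = (((1 + C)⁻¹ * C) * ‖ρ v‖) * ((n : ℝ) + 1)⁻¹ := by ring
                      _ ≤ (1 * ‖ρ v‖) * ((n : ℝ) + 1)⁻¹ := by
                          apply mul_le_mul_of_nonneg_right _ (by positivity)
                          exact mul_le_mul_of_nonneg_right key (norm_nonneg _)
                      _ = ((n : ℝ) + 1)⁻¹ * ‖ρ v‖ := by ring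
            have hlim : Tendsto (fun n : ℕ => ((n : ℝ) + 1)⁻¹ * ‖ρ v‖) atTop (𝓝 0) := by
              have h0 := tendsto_one_div_add_atTop_nhds_zero_nat (𝕜 := ℝ)
              have h1 : Tendsto (fun n : ℕ => ((n : ℝ) + 1)⁻¹) atTop (𝓝 0) := by
                simpa [one_div] using h0
              simpa using h1.mul_const ‖ρ v‖
            exact squeeze_zero_norm hbound hlim
          have : Tendsto (fun n => τ v + ε n • (σ' n (ρ v))) atTop (𝓝 (τ v + 0)) :=
            tendsto_const_nhds.add hsmall
          rw [add_zero] at this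
          refine this.congr fun n => ?_
          rw [one_smul, hσapp]
        · rw [hagree v hv hvW hAv]
          exact mk_congr _ _ (by rw [hAvu, hTu])

end StmtAux

namespace StmtAux

open Module

theorem seq_from_tower {p : ℙ ℝ (Fin d → ℝ) → ℙ ℝ (Fin d → ℝ)} (hrep : Rep p ⊤) :
    ∃ f : ℕ → (Fin d → ℝ) ≃ₗ[ℝ] (Fin d → ℝ),
      ∀ x : ℙ ℝ (Fin d → ℝ),
        Tendsto (fun n => projMap (f n) x) atTop (𝓝 (p x)) := by
  obtain ⟨T, σ, hσW, H⟩ := seq_of_rep hrep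
  obtain ⟨δ, hinj, hδ0⟩ := exists_pert T
  set hq : ℕ → (Fin d → ℝ) ≃ₗ[ℝ] (Fin d → ℝ) :=
    fun n => LinearEquiv.ofInjectiveEndo (T + δ n • LinearMap.id) (hinj n) with hqdef
  set f : ℕ → (Fin d → ℝ) ≃ₗ[ℝ] (Fin d → ℝ) := fun n => (σ n).trans (hq n) with hfdef
  refine ⟨f, fun x => ?_⟩
  induction x using Projectivization.ind with | h v hv =>
  obtain ⟨c, u, hu, _, hc, hconv, hpx⟩ := H v hv Submodule.mem_top
  have hfapp : ∀ n, f n v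
      = (T + δ n • LinearMap.id : (Fin d → ℝ) →ₗ[ℝ] (Fin d → ℝ)) (σ n v) := by
    intro n
    show hq n (σ n v) = _
    rw [hqdef]
    exact congrFun (LinearEquiv.coe_ofInjectiveEndo _ (hinj n)) (σ n v)
  -- convergence of the renormalized images
  have hT : Tendsto (fun n => T (c n • σ n v)) atTop (𝓝 (T u)) := by
    have hcont := (LinearMap.toContinuousLinearMap T).continuous.tendsto u
    have h2 := hcont.comp hconv
    have h4 : (LinearMap.toContinuousLinearMap T) u = T u := by
      rw [LinearMap.coe_toContinuousLinearMap']
    rw [h4] at h2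
    exact h2.congr fun n => by
      rw [Function.comp_apply, LinearMap.coe_toContinuousLinearMap']
  have hδs : Tendsto (fun n => δ n • (c n • σ n v)) atTop (𝓝 (0 : Fin d → ℝ)) := by
    have := hδ0.smul hconv
    rw [zero_smul] at this
    exact this
  have hsum : Tendsto (fun n => T (c n • σ n v) + δ n • (c n • σ n v)) atTop (𝓝 (T u)) := by
    have := hT.add hδs
    rw [add_zero] at this
    exact this
  have hval : ∀ n, T (c n • σ n v) + δ n • (c n • σ n v) = c n • (f n v) := by
    intro n
    calc T (c n • σ n v) + δ n • (c n • σ n v)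
        = (T + δ n • LinearMap.id : (Fin d → ℝ) →ₗ[ℝ] (Fin d → ℝ)) (c n • σ n v) := by
          rw [LinearMap.add_apply, LinearMap.smul_apply, LinearMap.id_apply]
      _ = c n • ((T + δ n • LinearMap.id : (Fin d → ℝ) →ₗ[ℝ] (Fin d → ℝ)) (σ n v)) := by
          rw [map_smul]
      _ = c n • (f n v) := by rw [hfapp]
  have hne : ∀ n, c n • (f n v) ≠ 0 := fun n =>
    smul_ne_zero (hc n) ((LinearEquiv.map_ne_zero_iff (f n)).mpr hv)
  have hmk : Tendsto (fun n => Projectivization.mk ℝ (c n • (f n v)) (hne n)) atTop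
      (𝓝 (Projectivization.mk ℝ (T u) hu)) := by
    refine tendsto_mk hne hu ?_
    exact hsum.congr fun n => hval n
  rw [hpx]
  refine hmk.congr fun n => ?_
  have h1 : Projectivization.mk ℝ (c n • (f n v)) (hne n)
      = Projectivization.mk ℝ (f n v) ((LinearEquiv.map_ne_zero_iff (f n)).mpr hv) :=
    mk_smul_eq _ (hc n) _
  rw [h1, projMap_mk (f n) hv ((LinearEquiv.map_ne_zero_iff (f n)).mpr hv)]

end StmtAux

/-- Every sequence in `GL(d,ℝ)` has a subsequence whose induced projective maps
converge pointwise on `ℙ(ℝ^d)`; consequently the action of `GL(d,ℝ)` on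
`ℙ(ℝ^d)` is tame: every element of the enveloping semigroup (the pointwise
closure of the induced maps) is a pointwise sequential limit of group elements. -/
theorem stmt_14 (g : ℕ → (Fin d → ℝ) ≃ₗ[ℝ] (Fin d → ℝ)) :
    (∃ φ : ℕ → ℕ, StrictMono φ ∧
      ∃ p : ℙ ℝ (Fin d → ℝ) → ℙ ℝ (Fin d → ℝ),
        ∀ x : ℙ ℝ (Fin d → ℝ),
          Tendsto (fun i => projMap (g (φ i)) x) atTop (𝓝 (p x))) ∧
    (∀ p ∈ closure (Set.range fun h : (Fin d → ℝ) ≃ₗ[ℝ] (Fin d → ℝ) => projMap h),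
      ∃ f : ℕ → (Fin d → ℝ) ≃ₗ[ℝ] (Fin d → ℝ),
        ∀ x : ℙ ℝ (Fin d → ℝ),
          Tendsto (fun n => projMap (f n) x) atTop (𝓝 (p x))) := by
  classical
  constructor
  · obtain ⟨φ, hφ, H⟩ := StmtAux.lemA
      (Module.finrank ℝ (⊤ : Submodule ℝ (Fin d → ℝ))) ⊤ le_rfl g
    refine ⟨φ, hφ, fun x =>
      if h : ∃ y, Tendsto (fun i => projMap (g (φ i)) x) atTop (𝓝 y) then h.choose else x,
      fun x => ?_⟩
    induction x using Projectivization.ind with | h v hv =>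
    have hex := H v hv Submodule.mem_top
    simp only [dif_pos hex]
    exact hex.choose_spec
  · intro p hp
    set L := Filter.comap (fun h : (Fin d → ℝ) ≃ₗ[ℝ] (Fin d → ℝ) => projMap h) (𝓝 p)
      with hLdef
    have hLne : L.NeBot := by
      apply Filter.comap_neBot
      intro t ht
      obtain ⟨q, hq1, hq2⟩ := mem_closure_iff_nhds.mp hp t ht
      obtain ⟨g0, rfl⟩ := hq2
      exact ⟨g0, hq1⟩
    have hpointL : ∀ x : ℙ ℝ (Fin d → ℝ),
        Tendsto (fun h : (Fin d → ℝ) ≃ₗ[ℝ] (Fin d → ℝ) => projMap h x) L (𝓝 (p x)) :=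
      fun x => ((continuous_apply x).tendsto p).comp tendsto_comap
    have hrep : StmtAux.Rep p ⊤ :=
      StmtAux.rep_of_filter (Module.finrank ℝ (⊤ : Submodule ℝ (Fin d → ℝ))) ⊤ le_rfl p L
        hLne (fun v hv => hpointL _)
    exact StmtAux.seq_from_tower hrep
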